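/- Let ℜ ⊆ F(𝒜), let r ∈ F(𝒜) and let Γ ∈ co(ℜ). Then ι(r) ∉ Q_Γ(ℜ) if and only if r ∉ K·ℜ_0(Γ) and |Γ ∩ supp(r)| ≤ 1. -/
import Mathlib


open MvPolynomial

noncomputable section

variable {K : Type*} [Field K] {n : ℕ}

open Classical in
/-- The support `supp(a) = {i : aᵢ ≠ 0}` of the linear form `∑ᵢ aᵢ xᵢ ∈ S₁`,
where linear forms of `S = K[x₁,…,xₙ]` are identified with their coefficient
vectors `a : Fin n → K`. -/
def lsupp (a : Fin n → K) : Finset (Fin n) :=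
  Finset.univ.filter (fun i => a i ≠ 0)

/-- `ι(r) = ∑_{i ∈ supp r} aᵢ · x_{supp(r) ∖ {i}}` for the linear form `r = ∑ᵢ aᵢ xᵢ`. -/
def iotaL (a : Fin n → K) : MvPolynomial (Fin n) K :=
  ∑ i ∈ lsupp a, C (a i) * ∏ j ∈ (lsupp a).erase i, X j

/-- `x_[n] = x₁⋯xₙ`. -/
def xAll (n : ℕ) (K : Type*) [Field K] : MvPolynomial (Fin n) K := ∏ i, X i

/-- `a : Fin n → K` (identified with the linear form `∑ᵢ aᵢ xᵢ ∈ S₁`) is a relation of the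
central arrangement whose hyperplanes are the kernels of the linear forms `α i`, i.e. it lies
in the kernel of the map `S₁ → V*`, `xᵢ ↦ αᵢ`. -/
def IsRel {V : Type*} [AddCommGroup V] [Module K V]
    (α : Fin n → Module.Dual K V) (a : Fin n → K) : Prop :=
  ∑ i, a i • α i = 0

/-- `J(ℜ) = (ι(r) : r ∈ ℜ)`. -/
def Jid (R : Set (Fin n → K)) : Ideal (MvPolynomial (Fin n) K) :=
  Ideal.span (iotaL '' R)

/-- `I(ℜ) = (ι(r) : r ∈ K·ℜ)`. -/
def Iid (R : Set (Fin n → K)) : Ideal (MvPolynomial (Fin n) K) :=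
  Ideal.span (iotaL '' (Submodule.span K R : Set (Fin n → K)))

/-- The Orlik–Terao ideal `I(𝒜) = (ι(r) : r ∈ F(𝒜))`. -/
def OTid {V : Type*} [AddCommGroup V] [Module K V]
    (α : Fin n → Module.Dual K V) : Ideal (MvPolynomial (Fin n) K) :=
  Ideal.span (iotaL '' {a | IsRel α a})

/-- The codimension (height) of an ideal `I`: the infimum of the heights, in the prime
spectrum, of the prime ideals containing `I`. -/
def codim {R : Type*} [CommRing R] (I : Ideal R) : ℕ∞ :=
  ⨅ p ∈ {p : PrimeSpectrum R | I ≤ p.asIdeal}, Order.height p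

/-- `Γ ∈ co(ℜ)`: `Γ` is an `ℜ`-cover, i.e. `|Γ ∩ supp(r)| ≠ 1` for every `r ∈ ℜ`. -/
def IsCover (R : Set (Fin n → K)) (Γ : Finset (Fin n)) : Prop :=
  ∀ r ∈ R, (Γ ∩ lsupp r).card ≠ 1

/-- `ℜ₀(Γ) = {r ∈ ℜ : Γ ∩ supp(r) = ∅}`. -/
def R0 (R : Set (Fin n → K)) (Γ : Finset (Fin n)) : Set (Fin n → K) :=
  {r ∈ R | Γ ∩ lsupp r = ∅}

/-- `Q_Γ(ℜ) = (xᵢ : i ∈ Γ) + I(ℜ₀(Γ))`. -/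
def Qid (R : Set (Fin n → K)) (Γ : Finset (Fin n)) : Ideal (MvPolynomial (Fin n) K) :=
  Ideal.span ((fun i => (X i : MvPolynomial (Fin n) K)) '' ↑Γ) ⊔ Iid (R0 R Γ)

/-! ### Auxiliary lemmas -/

lemma mem_lsupp {a : Fin n → K} {i : Fin n} : i ∈ lsupp a ↔ a i ≠ 0 := by
  simp [lsupp]

/-- Separation of a vector from a subspace of `Kⁿ` by a "dot product" functional. -/
lemma exists_perp_witness (S : Set (Fin n → K)) (v : Fin n → K)
    (hv : v ∉ Submodule.span K S) :
    ∃ w : Fin n → K, (∀ s ∈ S, ∑ i, s i * w i = 0) ∧ ∑ i, v i * w i ≠ 0 := by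
  obtain ⟨f, hfv, hfp⟩ :=
    Submodule.exists_dual_map_eq_bot_of_notMem hv inferInstance
  have hf : ∀ a : Fin n → K, f a = ∑ i, a i * f (fun j => if i = j then 1 else 0) := by
    intro a
    simpa [smul_eq_mul] using LinearMap.pi_apply_eq_sum_univ f a
  refine ⟨fun i => f (fun j => if i = j then 1 else 0), ?_, ?_⟩
  · intro s hs
    rw [← hf]
    have : f s ∈ (Submodule.span K S).map f :=
      Submodule.mem_map_of_mem (Submodule.subset_span hs)
    rwa [hfp, Submodule.mem_bot] at this
  · rw [← hf]; exact hfv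

/-- The span of a set of relations consists of relations. -/
lemma isRel_of_mem_span {V : Type*} [AddCommGroup V] [Module K V]
    (α : Fin n → Module.Dual K V) {S : Set (Fin n → K)}
    (hS : ∀ s ∈ S, IsRel α s) {a : Fin n → K}
    (ha : a ∈ Submodule.span K S) : IsRel α a := by
  let T : (Fin n → K) →ₗ[K] Module.Dual K V :=
    { toFun := fun a => ∑ i, a i • α i
      map_add' := by intro x y; simp [add_smul, Finset.sum_add_distrib]
      map_smul' := by intro c x; simp [mul_smul, Finset.smul_sum] }
  have hle : Submodule.span K S ≤ LinearMap.ker T :=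
    Submodule.span_le.2 (fun s hs => LinearMap.mem_ker.2 (hS s hs))
  exact hle ha

/-- Since all hyperplanes are genuine hyperplanes, no standard basis vector is a relation. -/
lemma single_not_rel {V : Type*} [AddCommGroup V] [Module K V]
    (α : Fin n → Module.Dual K V) (hne : ∀ i, α i ≠ 0) (j : Fin n) :
    ¬ IsRel α (Pi.single j 1) := by
  intro h
  apply hne j
  have : ∑ i, (Pi.single j 1 : Fin n → K) i • α i = α j := by
    rw [Finset.sum_eq_single j]
    · simp
    · intro i _ hij; simp [Pi.single_apply, hij]
    · simp
  rwa [IsRel, this] at h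

lemma dot_Z_eq (ws : Fin n → K) (wj : Fin n → Fin n → K) (a : Fin n → K) :
    ∑ i, Polynomial.C (a i) * (Polynomial.C (ws i)
        + ∑ j : Fin n, Polynomial.monomial ((j:ℕ)+1) (wj j i))
      = Polynomial.C (∑ i, a i * ws i)
        + ∑ j : Fin n, Polynomial.monomial ((j:ℕ)+1) (∑ i, a i * wj j i) := by
  have h : ∀ i, Polynomial.C (a i) * (Polynomial.C (ws i)
        + ∑ j : Fin n, Polynomial.monomial ((j:ℕ)+1) (wj j i))
      = Polynomial.C (a i * ws i)
        + ∑ j : Fin n, Polynomial.monomial ((j:ℕ)+1) (a i * wj j i) := by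
    intro i
    rw [mul_add, Finset.mul_sum, ← Polynomial.C_mul]
    simp [Polynomial.C_mul_monomial]
  rw [Finset.sum_congr rfl (fun i _ => h i), Finset.sum_add_distrib,
    ← map_sum Polynomial.C _ _, Finset.sum_comm]
  congr 1
  exact Finset.sum_congr rfl fun j _ => (map_sum (Polynomial.monomial _) _ _).symm

lemma Z_ne_zero (ws : Fin n → K) (wj : Fin n → Fin n → K) (i : Fin n)
    (h : wj i i ≠ 0) :
    (Polynomial.C (ws i) + ∑ j : Fin n, Polynomial.monomial ((j:ℕ)+1) (wj j i)) ≠ 0 := by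
  intro h0
  apply h
  have := congrArg (fun p => Polynomial.coeff p ((i:ℕ)+1)) h0
  simp only [Polynomial.coeff_add, Polynomial.coeff_zero, Polynomial.finset_sum_coeff,
    Polynomial.coeff_monomial, Polynomial.coeff_C] at this
  rw [Finset.sum_eq_single i] at this
  · simpa using this
  · intro j _ hji
    rw [if_neg]
    intro hEq
    exact hji (Fin.ext (by omega))
  · simp

lemma dot_coeff_zero (ws : Fin n → K) (wj : Fin n → Fin n → K) (a : Fin n → K) :
    Polynomial.coeff (Polynomial.C (∑ i, a i * ws i)
        + ∑ j : Fin n, Polynomial.monomial ((j:ℕ)+1) (∑ i, a i * wj j i)) 0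
      = ∑ i, a i * ws i := by
  simp [Polynomial.coeff_add, Polynomial.finset_sum_coeff, Polynomial.coeff_monomial]

lemma aeval_iotaL {L : Type*} [CommSemiring L] [Algebra K L] (y : Fin n → L) (a : Fin n → K) :
    MvPolynomial.aeval y (iotaL a)
      = ∑ i ∈ lsupp a, algebraMap K L (a i) * ∏ j ∈ (lsupp a).erase i, y j := by
  simp [iotaL, map_sum, map_mul, map_prod]

lemma aeval_iotaL_eq {L : Type*} [Field L] [Algebra K L] (y zv : Fin n → L)
    (a : Fin n → K) (hy : ∀ i ∈ lsupp a, y i = (zv i)⁻¹ ∧ zv i ≠ 0) :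
    MvPolynomial.aeval y (iotaL a)
      = (∏ j ∈ lsupp a, (zv j)⁻¹) * ∑ i, algebraMap K L (a i) * zv i := by
  rw [aeval_iotaL]
  rw [← Finset.sum_subset (Finset.subset_univ (lsupp a))
    (by intro i _ hi; rw [mem_lsupp, not_not] at hi; simp [hi])]
  rw [Finset.mul_sum]
  refine Finset.sum_congr rfl fun i hi => ?_
  have hprod : ∏ j ∈ (lsupp a).erase i, y j = ∏ j ∈ (lsupp a).erase i, (zv j)⁻¹ :=
    Finset.prod_congr rfl fun j hj => (hy j (Finset.mem_of_mem_erase hj)).1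
  have herase : ∏ j ∈ (lsupp a).erase i, (zv j)⁻¹ = zv i * ∏ j ∈ lsupp a, (zv j)⁻¹ := by
    rw [← Finset.mul_prod_erase (lsupp a) (fun j => (zv j)⁻¹) hi, ← mul_assoc,
      mul_inv_cancel₀ (hy i hi).2, one_mul]
  rw [hprod, herase]
  ring

/-- Lemma 4.3: let `ℜ ⊆ F(𝒜)`, `r ∈ F(𝒜)` and `Γ ∈ co(ℜ)`.  Then `ι(r) ∉ Q_Γ(ℜ)` if and
only if `r ∉ K·ℜ₀(Γ)` and `|Γ ∩ supp(r)| ≤ 1`. -/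
theorem iotaL_not_mem_Qid_iff
    {V : Type*} [AddCommGroup V] [Module K V] [FiniteDimensional K V]
    (α : Fin n → Module.Dual K V) (hne : ∀ i, α i ≠ 0)
    (hdist : ∀ i j, i ≠ j → LinearMap.ker (α i) ≠ LinearMap.ker (α j))
    (R : Set (Fin n → K)) (hR : ∀ r ∈ R, IsRel α r)
    (r : Fin n → K) (hr : IsRel α r)
    (Γ : Finset (Fin n)) (hΓ : IsCover R Γ) :
    iotaL r ∉ Qid R Γ ↔
      (r ∉ Submodule.span K (R0 R Γ) ∧ (Γ ∩ lsupp r).card ≤ 1) := by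
  classical
  constructor
  · -- contrapositive: ¬(A ∧ B) → ι(r) ∈ Q
    intro hmem
    by_contra hcon
    rw [not_and_or, not_not, not_le] at hcon
    apply hmem
    rcases hcon with h | h
    · exact Submodule.mem_sup_right (Ideal.subset_span ⟨r, h, rfl⟩)
    · apply Submodule.mem_sup_left
      unfold iotaL
      apply Ideal.sum_mem
      intro i _
      have hne' : ((Γ ∩ lsupp r).erase i).Nonempty := by
        rw [← Finset.card_pos]
        have := Finset.pred_card_le_card_erase (s := Γ ∩ lsupp r) (a := i)
        omega
      obtain ⟨k, hk⟩ := hne'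
      rw [Finset.mem_erase, Finset.mem_inter] at hk
      have hk1 : k ∈ (lsupp r).erase i := Finset.mem_erase.2 ⟨hk.1, hk.2.2⟩
      rw [← Finset.mul_prod_erase _ _ hk1]
      exact Ideal.mul_mem_left _ _
        (Ideal.mul_mem_right _ _ (Ideal.subset_span ⟨k, hk.2.1, rfl⟩))
  · rintro ⟨hrspan, hcard⟩ hmem
    -- witnesses
    obtain ⟨ws, hws1, hws2⟩ := exists_perp_witness (R0 R Γ) r hrspan
    have hsingle : ∀ j : Fin n, (Pi.single j 1 : Fin n → K) ∉ Submodule.span K (R0 R Γ) :=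
      fun j hj => single_not_rel α hne j
        (isRel_of_mem_span α (fun s hs => hR s hs.1) hj)
    choose wj hwj1 hwj2 using fun j => exists_perp_witness (R0 R Γ) _ (hsingle j)
    have hwjj : ∀ j, wj j j ≠ 0 := by
      intro j h
      apply hwj2 j
      rw [Finset.sum_eq_single j]
      · simp [h]
      · intro i _ hij; simp [Pi.single_apply, hij]
      · simp
    -- the generic point over L = K(t)
    obtain ⟨Z, hZ⟩ : ∃ Z : Fin n → Polynomial K, ∀ i,
        Z i = Polynomial.C (ws i)
          + ∑ j : Fin n, Polynomial.monomial ((j:ℕ)+1) (wj j i) := ⟨_, fun _ => rfl⟩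
    set L := FractionRing (Polynomial K) with hL
    have hinj : Function.Injective (algebraMap (Polynomial K) L) :=
      IsFractionRing.injective (Polynomial K) L
    set zv : Fin n → L := fun i => algebraMap (Polynomial K) L (Z i) with hzv
    have hzvne : ∀ i, zv i ≠ 0 := by
      intro i h
      rw [hzv] at h
      simp only [map_eq_zero_iff _ hinj] at h
      rw [hZ i] at h
      exact Z_ne_zero ws wj i (hwjj i) h
    set y : Fin n → L := fun i => if i ∈ Γ then 0 else (zv i)⁻¹ with hy
    have halgC : ∀ c : K, algebraMap (Polynomial K) L (Polynomial.C c) = algebraMap K L c := by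
      intro c
      rw [← Polynomial.algebraMap_eq, ← IsScalarTower.algebraMap_apply]
    have hdotL : ∀ a : Fin n → K, ∑ i, algebraMap K L (a i) * zv i
        = algebraMap (Polynomial K) L (∑ i, Polynomial.C (a i) * Z i) := by
      intro a
      rw [map_sum]
      exact Finset.sum_congr rfl fun i _ => by rw [map_mul, halgC]
    -- the span of ℜ₀(Γ) satisfies both linear conditions
    let P : Submodule K (Fin n → K) :=
      { carrier := {a | (∀ i ∈ Γ, a i = 0) ∧ ∑ i, Polynomial.C (a i) * Z i = 0}
        add_mem' := by
          rintro a b ⟨ha1, ha2⟩ ⟨hb1, hb2⟩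
          refine ⟨fun i hi => by simp [Pi.add_apply, ha1 i hi, hb1 i hi], ?_⟩
          have h : ∀ i, Polynomial.C ((a + b) i) * Z i
              = Polynomial.C (a i) * Z i + Polynomial.C (b i) * Z i := by
            intro i; simp [add_mul]
          rw [Finset.sum_congr rfl fun i _ => h i, Finset.sum_add_distrib, ha2, hb2, add_zero]
        zero_mem' := by simp
        smul_mem' := by
          rintro c a ⟨ha1, ha2⟩
          refine ⟨fun i hi => by simp [ha1 i hi], ?_⟩
          have h : ∀ i, Polynomial.C ((c • a) i) * Z i
              = Polynomial.C c * (Polynomial.C (a i) * Z i) := by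
            intro i; simp [mul_assoc]
          rw [Finset.sum_congr rfl fun i _ => h i, ← Finset.mul_sum, ha2, mul_zero] }
    have hPle : Submodule.span K (R0 R Γ) ≤ P := by
      rw [Submodule.span_le]
      rintro s ⟨hsR, hsΓ⟩
      constructor
      · intro i hi
        by_contra h
        have hmem2 : i ∈ Γ ∩ lsupp s := Finset.mem_inter.2 ⟨hi, mem_lsupp.2 h⟩
        rw [hsΓ] at hmem2
        exact absurd hmem2 (Finset.notMem_empty i)
      · simp only [hZ]
        rw [dot_Z_eq, hws1 s ⟨hsR, hsΓ⟩]
        have : ∀ j : Fin n, ∑ i, s i * wj j i = 0 := fun j => hwj1 j s ⟨hsR, hsΓ⟩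
        simp [this]
    -- the evaluation kills Q
    have hQ : ∀ q ∈ Qid R Γ, MvPolynomial.aeval y q = 0 := by
      intro q hq
      have hker : Qid R Γ ≤ RingHom.ker ((MvPolynomial.aeval y :
          MvPolynomial (Fin n) K →ₐ[K] L) : MvPolynomial (Fin n) K →+* L) := by
        apply sup_le
        · rw [Ideal.span_le]
          rintro p ⟨i, hiΓ, rfl⟩
          simp only [SetLike.mem_coe, RingHom.mem_ker, AlgHom.coe_toRingHom, aeval_X]
          rw [hy]
          simp [Finset.mem_coe.1 hiΓ]
        · rw [Iid, Ideal.span_le]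
          rintro p ⟨s, hs, rfl⟩
          have hsP := hPle hs
          simp only [SetLike.mem_coe, RingHom.mem_ker, AlgHom.coe_toRingHom]
          rw [aeval_iotaL_eq y zv s ?_]
          · rw [hdotL s, hsP.2, map_zero, mul_zero]
          · intro i hi
            have hiΓ : i ∉ Γ := fun hmemΓ => mem_lsupp.1 hi (hsP.1 i hmemΓ)
            exact ⟨by rw [hy]; simp [hiΓ], hzvne i⟩
      exact hker hq
    have h0 : MvPolynomial.aeval y (iotaL r) = 0 := hQ _ hmem
    -- case distinction on |Γ ∩ supp r|
    have hc01 : (Γ ∩ lsupp r).card = 0 ∨ (Γ ∩ lsupp r).card = 1 := by omega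
    rcases hc01 with hc | hc
    · -- |Γ ∩ supp r| = 0
      have hinter : Γ ∩ lsupp r = ∅ := Finset.card_eq_zero.1 hc
      have hΓr : ∀ i ∈ Γ, r i = 0 := by
        intro i hi
        by_contra h
        have : i ∈ Γ ∩ lsupp r := Finset.mem_inter.2 ⟨hi, mem_lsupp.2 h⟩
        rw [hinter] at this
        exact absurd this (Finset.notMem_empty i)
      rw [aeval_iotaL_eq y zv r ?_] at h0
      · rcases mul_eq_zero.1 h0 with h | h
        · exact absurd h (Finset.prod_ne_zero_iff.2 fun j _ => inv_ne_zero (hzvne j))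
        · rw [hdotL r, map_eq_zero_iff _ hinj] at h
          simp only [hZ] at h
          rw [dot_Z_eq] at h
          have hcz := dot_coeff_zero ws wj r
          rw [h, Polynomial.coeff_zero] at hcz
          exact hws2 hcz.symm
      · intro i hi
        have hiΓ : i ∉ Γ := fun hmemΓ => mem_lsupp.1 hi (hΓr i hmemΓ)
        exact ⟨by rw [hy]; simp [hiΓ], hzvne i⟩
    · -- |Γ ∩ supp r| = 1
      obtain ⟨k, hk⟩ := Finset.card_eq_one.1 hc
      have hkmem : k ∈ Γ ∩ lsupp r := by rw [hk]; exact Finset.mem_singleton_self k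
      rw [Finset.mem_inter] at hkmem
      have hyk : y k = 0 := by rw [hy]; simp [hkmem.1]
      rw [aeval_iotaL, Finset.sum_eq_single k] at h0
      · -- the k-th term is nonzero: contradiction
        have hne2 : algebraMap K L (r k) * ∏ j ∈ (lsupp r).erase k, y j ≠ 0 := by
          apply mul_ne_zero
          · rw [map_ne_zero_iff _ (algebraMap K L).injective]
            exact mem_lsupp.1 hkmem.2
          · rw [Finset.prod_ne_zero_iff]
            intro j hj
            rw [Finset.mem_erase] at hj
            have hjΓ : j ∉ Γ := by
              intro hjm
              have : j ∈ Γ ∩ lsupp r := Finset.mem_inter.2 ⟨hjm, hj.2⟩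
              rw [hk, Finset.mem_singleton] at this
              exact hj.1 this
            rw [hy]
            simp [hjΓ, hzvne j]
        exact hne2 h0
      · intro i hi hik
        have hki : k ∈ (lsupp r).erase i :=
          Finset.mem_erase.2 ⟨fun h => hik h.symm, hkmem.2⟩
        rw [Finset.prod_eq_zero hki hyk, mul_zero]
      · intro hknot
        exact absurd hkmem.2 hknot

end
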